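/- Let M be a path-connected topological space, K ⊆ M a nonempty compact set, and f : M → ℝ/ℤ a continuous map. Let I and J be two distinct connected components of (ℝ/ℤ) ∖ f(K), and suppose the frontier of I in ℝ/ℤ is {p, q} with p ≠ q and that there are points k₁, k₂ ∈ K with f(k₁) = p and f(k₂) = q. For an open arc X ∈ {I, J}, let π_X : ℝ/ℤ → ℝ/ℤ denote a continuous degree-one map that sends (ℝ/ℤ) ∖ X to 0 and maps X homeomorphically, preserving orientation, onto (ℝ/ℤ) ∖ {0}. Then there is no homotopy H : [0,1] × M → ℝ/ℤ from π_I ∘ f to π_J ∘ f satisfying H(t, x) = 0 for all t ∈ [0,1] and all x ∈ K. (This is the paper's lemma that the retractions of a Lyapunov circle map to two distinct complementary intervals of the image of the recurrent set are non-homotopic relative to sending the recurrent set to 0.) -/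

import Mathlib

open Set

noncomputable def carg (x : AddCircle (1:ℝ)) : ℝ :=
  (QuotientAddGroup.equivIocMod one_pos (-(1/2) : ℝ) x : ℝ)

lemma carg_mem (x : AddCircle (1:ℝ)) : carg x ∈ Set.Ioc (-(1/2) : ℝ) (1/2) := by
  have h : carg x ∈ Set.Ioc (-(1/2):ℝ) (-(1/2)+1) :=
    (QuotientAddGroup.equivIocMod one_pos (-(1/2) : ℝ) x).2
  exact ⟨h.1, by have := h.2; linarith⟩

lemma coe_carg (x : AddCircle (1:ℝ)) : ((carg x : ℝ) : AddCircle (1:ℝ)) = x :=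
  (QuotientAddGroup.equivIocMod one_pos (-(1/2) : ℝ)).symm_apply_apply x

lemma carg_coe {r : ℝ} (h : r ∈ Set.Ioc (-(1/2):ℝ) (1/2)) :
    carg ((r : ℝ) : AddCircle (1:ℝ)) = r := by
  have h' : r ∈ Set.Ioc (-(1/2):ℝ) (-(1/2)+1) := by
    rw [(by norm_num : (-(1/2) : ℝ) + 1 = 1/2)]; exact h
  have := QuotientAddGroup.equivIocMod_coe one_pos (-(1/2):ℝ) r
  rw [carg, this]
  exact (toIocMod_eq_self one_pos).mpr h'

lemma norm_eq_abs_carg (x : AddCircle (1:ℝ)) : ‖x‖ = |carg x| := by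
  conv_lhs => rw [← coe_carg x]
  rw [AddCircle.norm_coe_eq_abs_iff (p := (1:ℝ)) (one_ne_zero)]
  have h := carg_mem x
  rw [abs_one]
  rw [abs_le]
  constructor <;> [linarith [h.1]; linarith [h.2]]

lemma coe_eq_coe_iff {x y : ℝ} :
    ((x : ℝ) : AddCircle (1:ℝ)) = (y : ℝ) ↔ ∃ k : ℤ, x = y + k := by
  rw [QuotientAddGroup.eq_iff_sub_mem]
  constructor
  · rintro h
    rw [AddSubgroup.mem_zmultiples_iff] at h
    obtain ⟨k, hk⟩ := h
    exact ⟨k, by simp at hk; linarith⟩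
  · rintro ⟨k, rfl⟩
    rw [AddSubgroup.mem_zmultiples_iff]
    exact ⟨k, by simp⟩

lemma carg_continuousAt {x : AddCircle (1:ℝ)} (h : ‖x‖ < 1/2) : ContinuousAt carg x := by
  haveI : Fact ((0:ℝ) < 1) := ⟨one_pos⟩
  have hx : x ≠ ((-(1/2) : ℝ) : AddCircle (1:ℝ)) := by
    intro he
    rw [he] at h
    rw [norm_eq_abs_carg] at h
    have h2 : ((-(1/2) : ℝ) : AddCircle (1:ℝ)) = ((1/2 : ℝ) : AddCircle (1:ℝ)) := by
      rw [coe_eq_coe_iff]; exact ⟨-1, by norm_num⟩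
    rw [h2, carg_coe (by constructor <;> norm_num)] at h
    rw [abs_of_pos (by norm_num)] at h
    linarith
  have := AddCircle.continuousAt_equivIoc 1 (-(1/2) : ℝ) hx
  exact continuousAt_subtype_val.comp this

section
variable {g : ℝ → ℝ}

lemma g_int (hg1 : ∀ t : ℝ, g (t + 1) = g t + 1) : ∀ (t : ℝ) (k : ℤ), g (t + k) = g t + k := by
  intro t k
  induction k using Int.induction_on with
  | zero => simp
  | succ n ih => push_cast; rw [← add_assoc, hg1]; push_cast at ih; rw [ih]; ring
  | pred n ih =>
      push_cast
      have := hg1 (t + (-(n:ℝ) - 1))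
      push_cast at ih
      have h2 : t + (-(n:ℝ) - 1) + 1 = t + -(n:ℝ) := by ring
      rw [h2] at this
      rw [ih] at this
      linarith

lemma stair_unif (hgc : Continuous g) (hg1 : ∀ t : ℝ, g (t + 1) = g t + 1) :
    ∃ δ : ℝ, 0 < δ ∧ δ < 1/2 ∧ ∀ x y : ℝ, |x - y| ≤ δ → |g x - g y| < 1/2 := by
  set h : ℝ → ℝ := fun t => g t - t with hh
  have hint : ∀ (t : ℝ) (k : ℤ), h (t + k) = h t := by
    intro t k; simp only [hh]; rw [g_int hg1 t k]; ring
  have hc : Continuous h := hgc.sub continuous_id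
  have hK : IsCompact (Icc (-1:ℝ) 2) := isCompact_Icc
  have huc := hK.uniformContinuousOn_of_continuous (hc.continuousOn)
  rw [Metric.uniformContinuousOn_iff] at huc
  obtain ⟨δ₀, hδ₀, hucd⟩ := huc (1/4) (by norm_num)
  refine ⟨min (δ₀/2) (1/4), by positivity, by
    have := min_le_right (δ₀/2) (1/4:ℝ); linarith, ?_⟩
  intro x y hxy
  have hδle : |x - y| ≤ 1/4 := le_trans hxy (min_le_right _ _)
  have hδle2 : |x - y| ≤ δ₀/2 := le_trans hxy (min_le_left _ _)
  set k : ℤ := ⌊x⌋ with hk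
  have hx0 : 0 ≤ x - (k:ℝ) ∧ x - (k:ℝ) < 1 := by
    constructor
    · have : (k:ℝ) ≤ x := Int.floor_le x
      linarith
    · have : x < (k:ℝ) + 1 := Int.lt_floor_add_one x
      linarith
  have habs := abs_le.mp hδle
  have hx1 : x - (k:ℝ) ∈ Icc (-1:ℝ) 2 := ⟨by linarith [hx0.1], by linarith [hx0.2]⟩
  have hy1 : y - (k:ℝ) ∈ Icc (-1:ℝ) 2 :=
    ⟨by linarith [hx0.1, habs.2], by linarith [hx0.2, habs.1]⟩
  have hdist : dist (x - (k:ℝ)) (y - k) < δ₀ := by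
    rw [Real.dist_eq]
    have : x - k - (y - k) = x - y := by ring
    rw [this]
    calc |x - y| ≤ δ₀/2 := hδle2
    _ < δ₀ := by linarith
  have := hucd _ hx1 _ hy1 hdist
  rw [Real.dist_eq] at this
  have hhx : h (x - k) = h x := by
    have := hint (x - k) k; rw [(by ring : x - (k:ℝ) + k = x)] at this; linarith [this]
  have hhy : h (y - k) = h y := by
    have := hint (y - k) k; rw [(by ring : y - (k:ℝ) + k = y)] at this; linarith [this]
  rw [hhx, hhy] at this
  have hgx : g x - g y = (h x - h y) + (x - y) := by simp only [hh]; ring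
  rw [hgx]
  calc |h x - h y + (x - y)| ≤ |h x - h y| + |x - y| := abs_add_le _ _
  _ < 1/4 + 1/4 := by linarith
  _ = 1/2 := by norm_num

end

lemma int_valued_const {D : ℝ → ℝ} (hc : Continuous D) (hint : ∀ s : ℝ, ∃ m : ℤ, D s = m) :
    D 0 = D 1 := by
  by_contra hne
  obtain ⟨m₀, hm₀⟩ := hint 0
  obtain ⟨m₁, hm₁⟩ := hint 1
  rcases lt_or_gt_of_ne hne with hlt | hgt
  · have : D 0 + 1/2 ∈ Icc (D 0) (D 1) := by
      constructor
      · linarith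
      · rw [hm₀, hm₁] at *
        have : m₀ < m₁ := by exact_mod_cast hlt
        have : (m₀:ℝ) + 1 ≤ m₁ := by exact_mod_cast this
        linarith
    obtain ⟨s, _, hs⟩ := intermediate_value_Icc (by norm_num : (0:ℝ) ≤ 1) hc.continuousOn this
    obtain ⟨m, hm⟩ := hint s
    rw [hm, hm₀] at hs
    have : ((m - m₀ : ℤ) : ℝ) = 1/2 := by push_cast; linarith
    rcases le_or_gt (m - m₀) 0 with h | h
    · have : ((m - m₀ : ℤ) : ℝ) ≤ 0 := by exact_mod_cast h
      linarith
    · have : (1:ℝ) ≤ ((m - m₀ : ℤ) : ℝ) := by exact_mod_cast h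
      linarith
  · have : D 1 + 1/2 ∈ Icc (D 1) (D 0) := by
      constructor
      · linarith
      · rw [hm₀, hm₁] at *
        have : m₁ < m₀ := by exact_mod_cast hgt
        have : (m₁:ℝ) + 1 ≤ m₀ := by exact_mod_cast this
        linarith
    obtain ⟨s, _, hs⟩ := intermediate_value_Icc' (by norm_num : (0:ℝ) ≤ 1) hc.continuousOn this
    obtain ⟨m, hm⟩ := hint s
    rw [hm, hm₁] at hs
    have : ((m - m₁ : ℤ) : ℝ) = 1/2 := by push_cast; linarith
    rcases le_or_gt (m - m₁) 0 with h | h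
    · have : ((m - m₁ : ℤ) : ℝ) ≤ 0 := by exact_mod_cast h
      linarith
    · have : (1:ℝ) ≤ ((m - m₁ : ℤ) : ℝ) := by exact_mod_cast h
      linarith

noncomputable def chainLift (u : ℕ → AddCircle (1:ℝ)) : ℕ → ℝ
  | 0 => carg (u 0)
  | (i+1) => chainLift u i + carg (u (i+1) - u i)

lemma chainLift_coe (u : ℕ → AddCircle (1:ℝ)) :
    ∀ i, ((chainLift u i : ℝ) : AddCircle (1:ℝ)) = u i := by
  intro i
  induction i with
  | zero => exact coe_carg _
  | succ n ih =>
      show ((chainLift u n + carg (u (n+1) - u n) : ℝ) : AddCircle (1:ℝ)) = u (n+1)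
      rw [QuotientAddGroup.mk_add, ih, coe_carg]
      abel

lemma chainLift_step (u : ℕ → AddCircle (1:ℝ)) (i : ℕ) :
    |chainLift u (i+1) - chainLift u i| = ‖u (i+1) - u i‖ := by
  show |chainLift u i + carg (u (i+1) - u i) - chainLift u i| = _
  rw [norm_eq_abs_carg]
  congr 1
  ring

lemma chain_sum {π' : AddCircle (1:ℝ) → AddCircle (1:ℝ)} {g : ℝ → ℝ}
    (hcomm : ∀ t : ℝ, π' ((t : ℝ) : AddCircle (1:ℝ)) = ((g t : ℝ) : AddCircle (1:ℝ)))
    {δ : ℝ} (hδ : ∀ x y : ℝ, |x - y| ≤ δ → |g x - g y| < 1/2)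
    (u : ℕ → AddCircle (1:ℝ)) (n : ℕ) (hu : ∀ i < n, ‖u (i+1) - u i‖ ≤ δ) :
    ∑ i ∈ Finset.range n, carg (π' (u (i+1)) - π' (u i))
      = g (chainLift u n) - g (chainLift u 0) := by
  rw [← Finset.sum_range_sub (fun i => g (chainLift u i)) n]
  apply Finset.sum_congr rfl
  intro i hi
  rw [Finset.mem_range] at hi
  have hstep : |chainLift u (i+1) - chainLift u i| ≤ δ := by
    rw [chainLift_step]; exact hu i hi
  have hr : |g (chainLift u (i+1)) - g (chainLift u i)| < 1/2 := hδ _ _ hstep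
  have hπ : ∀ j, π' (u j) = ((g (chainLift u j) : ℝ) : AddCircle (1:ℝ)) := by
    intro j
    rw [← chainLift_coe u j, hcomm]
  rw [hπ (i+1), hπ i]
  rw [← QuotientAddGroup.mk_sub]
  apply carg_coe
  have := abs_lt.mp hr
  exact ⟨by linarith, by linarith⟩

lemma stair_struct {X : Set (AddCircle (1:ℝ))} {π' : AddCircle (1:ℝ) → AddCircle (1:ℝ)} {g : ℝ → ℝ}
    (hπc : Continuous π')
    (hgc : Continuous g) (hgm : Monotone g)
    (hg1 : ∀ t : ℝ, g (t + 1) = g t + 1)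
    (hcomm : ∀ t : ℝ, π' ((t:ℝ) : AddCircle (1:ℝ)) = ((g t : ℝ) : AddCircle (1:ℝ)))
    (hzero : ∀ z ∉ X, π' z = 0)
    (hmaps : Set.MapsTo π' X {0}ᶜ)
    (hXconn : IsPreconnected X)
    {z₀ : AddCircle (1:ℝ)} (hz₀ : z₀ ∈ X)
    {w₁ w₂ : AddCircle (1:ℝ)} (hw : w₁ ≠ w₂) (hw₁ : w₁ ∉ X) (hw₂ : w₂ ∉ X) :
    ∃ c d : ℝ, c < d ∧ d < c + 1 ∧
      (∀ t : ℝ, ((t:ℝ) : AddCircle (1:ℝ)) ∈ X ↔ ∃ k : ℤ, c + (k:ℝ) < t ∧ t < d + (k:ℝ)) ∧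
      g d = g c + 1 ∧
      (∀ (x : ℝ) (k : ℤ), d + (k:ℝ) - 1 ≤ x → x ≤ c + (k:ℝ) → g x = g c + k) := by
  classical
  -- X is open
  have hXeq : X = π' ⁻¹' ({0}ᶜ) := by
    ext z
    constructor
    · intro hz; exact hmaps hz
    · intro hz
      by_contra hzX
      exact hz (hzero z hzX)
  have hXo : IsOpen X := by
    rw [hXeq]
    exact (isOpen_compl_singleton).preimage hπc
  -- integer fibres
  have hAiff : ∀ t : ℝ, (((t:ℝ) : AddCircle (1:ℝ)) ∈ X) ↔ ¬∃ m : ℤ, g t = (m:ℝ) := by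
    intro t
    constructor
    · intro ht hm
      obtain ⟨m, hm⟩ := hm
      have h0 : ((g t : ℝ) : AddCircle (1:ℝ)) = 0 := by
        rw [hm]
        rw [AddCircle.coe_eq_zero_iff]
        exact ⟨m, by simp⟩
      have := hmaps ht
      rw [hcomm t] at this
      exact this h0
    · intro hm
      by_contra ht
      have := hzero _ ht
      rw [hcomm t] at this
      rw [AddCircle.coe_eq_zero_iff] at this
      obtain ⟨n, hn⟩ := this
      exact hm ⟨n, by simpa using hn.symm⟩
  set S : Set ℝ := {s | ∃ m : ℤ, g s = (m:ℝ)} with hSdef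
  have hSclosed : IsClosed S := by
    have : S = g ⁻¹' (Set.range ((↑) : ℤ → ℝ)) := by
      ext s; simp [hSdef, eq_comm, Set.mem_preimage, Set.mem_range]
    rw [this]
    exact Int.isClosedEmbedding_coe_real.isClosed_range.preimage hgc
  set t₀ : ℝ := carg z₀ with ht₀def
  have ht₀X : ((t₀:ℝ) : AddCircle (1:ℝ)) ∈ X := by rw [coe_carg]; exact hz₀
  have ht₀S : t₀ ∉ S := by
    intro h
    exact (hAiff t₀).mp ht₀X h
  -- c
  have hlow : (S ∩ Iic t₀).Nonempty := by
    have h1 : g (t₀ - 1) = g t₀ - 1 := by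
      have := hg1 (t₀ - 1); rw [(by ring : t₀ - 1 + 1 = t₀)] at this; linarith
    have hmem : ((⌊g t₀⌋ : ℝ)) ∈ Icc (g (t₀ - 1)) (g t₀) := by
      constructor
      · rw [h1]; linarith [Int.sub_one_lt_floor (g t₀)]
      · exact Int.floor_le _
    obtain ⟨s, hs1, hs2⟩ := intermediate_value_Icc (by linarith : t₀ - 1 ≤ t₀) hgc.continuousOn hmem
    exact ⟨s, ⟨⌊g t₀⌋, hs2⟩, hs1.2⟩
  have hbddA : BddAbove (S ∩ Iic t₀) := ⟨t₀, fun x hx => hx.2⟩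
  set c : ℝ := sSup (S ∩ Iic t₀) with hcdef
  have hcS : c ∈ S ∩ Iic t₀ := (hSclosed.inter isClosed_Iic).csSup_mem hlow hbddA
  have hct₀ : c < t₀ := lt_of_le_of_ne hcS.2 (fun h => ht₀S (h ▸ hcS.1))
  -- d
  have hhigh : (S ∩ Ici t₀).Nonempty := by
    have h1 : g (t₀ + 1) = g t₀ + 1 := hg1 t₀
    have hmem : ((⌈g t₀⌉ : ℝ)) ∈ Icc (g t₀) (g (t₀ + 1)) := by
      constructor
      · exact Int.le_ceil _
      · rw [h1]; linarith [Int.ceil_lt_add_one (g t₀)]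
    obtain ⟨s, hs1, hs2⟩ := intermediate_value_Icc (by linarith : t₀ ≤ t₀ + 1) hgc.continuousOn hmem
    exact ⟨s, ⟨⌈g t₀⌉, hs2⟩, hs1.1⟩
  have hbddB : BddBelow (S ∩ Ici t₀) := ⟨t₀, fun x hx => hx.2⟩
  set d : ℝ := sInf (S ∩ Ici t₀) with hddef
  have hdS : d ∈ S ∩ Ici t₀ := (hSclosed.inter isClosed_Ici).csInf_mem hhigh hbddB
  have htd : t₀ < d := lt_of_le_of_ne hdS.2 (fun h => ht₀S (h.symm ▸ hdS.1))
  have hIoo : ∀ s : ℝ, c < s → s < d → s ∉ S := by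
    intro s h1 h2 hsS
    rcases le_total s t₀ with h | h
    · have : s ≤ c := le_csSup hbddA ⟨hsS, h⟩
      linarith
    · have : d ≤ s := csInf_le hbddB ⟨hsS, h⟩
      linarith
  have hcd : c < d := lt_trans hct₀ htd
  have hdc1 : d ≤ c + 1 := by
    by_contra hcon
    push_neg at hcon
    have hc1S : c + 1 ∈ S := by
      obtain ⟨m, hm⟩ := hcS.1
      exact ⟨m + 1, by rw [hg1 c, hm]; push_cast; ring⟩
    exact hIoo (c+1) (by linarith) hcon hc1S
  -- membership characterisation
  have hmem : ∀ t : ℝ, (((t:ℝ) : AddCircle (1:ℝ)) ∈ X ↔ ∃ k : ℤ, c + (k:ℝ) < t ∧ t < d + (k:ℝ)) := by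
    intro t
    constructor
    · -- hard direction, by connectedness
      intro htX
      by_contra hcon
      push_neg at hcon
      set U : Set (AddCircle (1:ℝ)) := (fun r : ℝ => ((r:ℝ) : AddCircle (1:ℝ))) '' (Ioo c d) with hUdef
      set Cl : Set (AddCircle (1:ℝ)) := (fun r : ℝ => ((r:ℝ) : AddCircle (1:ℝ))) '' (Icc c d) with hCldef
      set V : Set (AddCircle (1:ℝ)) := X \ Cl with hVdef
      have hUo : IsOpen U := QuotientAddGroup.isOpenMap_coe _ isOpen_Ioo
      have hClc : IsClosed Cl := (isCompact_Icc.image (AddCircle.continuous_mk' 1)).isClosed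
      have hVo : IsOpen V := hXo.sdiff hClc
      have hUX : U ⊆ X := by
        rintro z ⟨r, hr, rfl⟩
        rw [hAiff]
        exact fun hm => hIoo r hr.1 hr.2 hm
      have hUCl : U ⊆ Cl := Set.image_mono Ioo_subset_Icc_self
      have hcover : X ⊆ U ∪ V := by
        intro z hz
        by_cases hzCl : z ∈ Cl
        · obtain ⟨u, hu, rfl⟩ := hzCl
          left
          refine ⟨u, ⟨?_, ?_⟩, rfl⟩
          · rcases eq_or_lt_of_le hu.1 with h | h
            · exfalso
              apply (hAiff u).mp hz
              rw [← h]
              exact hcS.1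
            · exact h
          · rcases eq_or_lt_of_le hu.2 with h | h
            · exfalso
              apply (hAiff u).mp hz
              rw [h]
              exact hdS.1
            · exact h
        · exact Or.inr ⟨hz, hzCl⟩
      have hXU : (X ∩ U).Nonempty := ⟨((t₀:ℝ) : AddCircle (1:ℝ)), ht₀X, ⟨t₀, ⟨hct₀, htd⟩, rfl⟩⟩
      have hXV : (X ∩ V).Nonempty := by
        refine ⟨((t:ℝ) : AddCircle (1:ℝ)), htX, htX, ?_⟩
        rintro ⟨u, hu, huv⟩
        obtain ⟨k, hk⟩ := coe_eq_coe_iff.mp huv.symm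
        have hu1 : u ≠ c := by
          intro he
          apply (hAiff t).mp htX
          obtain ⟨m, hm⟩ := hcS.1
          refine ⟨m + k, ?_⟩
          rw [hk, he, g_int hg1 c k, hm]
          push_cast; ring
        have hu2 : u ≠ d := by
          intro he
          apply (hAiff t).mp htX
          obtain ⟨m, hm⟩ := hdS.1
          refine ⟨m + k, ?_⟩
          rw [hk, he, g_int hg1 d k, hm]
          push_cast; ring
        have hcu : c < u := lt_of_le_of_ne hu.1 (Ne.symm hu1)
        have hud : u < d := lt_of_le_of_ne hu.2 hu2
        have h4 := hcon k (by rw [hk]; linarith)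
        rw [hk] at h4
        linarith
      obtain ⟨z, hzX, hzU, hzV⟩ := hXconn U V hUo hVo hcover hXU hXV
      exact hzV.2 (hUCl hzU)
    · rintro ⟨k, hk1, hk2⟩
      have h1 : ((t:ℝ) : AddCircle (1:ℝ)) = ((t - k : ℝ) : AddCircle (1:ℝ)) := by
        rw [coe_eq_coe_iff]; exact ⟨k, by ring⟩
      rw [h1, hAiff]
      intro hm
      obtain ⟨m, hm⟩ := hm
      exact hIoo (t - k) (by linarith) (by linarith) ⟨m, hm⟩
  -- nondegeneracy
  have hdlt : d < c + 1 := by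
    rcases lt_or_eq_of_le hdc1 with h | h
    · exact h
    · exfalso
      have hnotX : ∀ z : AddCircle (1:ℝ), z ∉ X → z = ((c:ℝ) : AddCircle (1:ℝ)) := by
        intro z hz
        have hz2 : ((carg z : ℝ) : AddCircle (1:ℝ)) ∉ X := by rw [coe_carg]; exact hz
        set s : ℝ := carg z with hsdef
        have hnot : ¬∃ k : ℤ, c + (k:ℝ) < s ∧ s < d + (k:ℝ) := fun hc' => hz2 ((hmem s).mpr hc')
        push_neg at hnot
        set k : ℤ := ⌊s - c⌋ with hkdef
        have h1 : c + (k:ℝ) ≤ s := by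
          have := Int.floor_le (s - c); rw [← hkdef] at this; linarith
        have h2 : s < c + (k:ℝ) + 1 := by
          have := Int.lt_floor_add_one (s - c); rw [← hkdef] at this; linarith
        have hsck : s = c + (k:ℝ) := by
          rcases eq_or_lt_of_le h1 with h' | h'
          · exact h'.symm
          · exfalso
            have h3 : d + (k:ℝ) ≤ s := hnot k h'
            rw [h] at h3
            linarith
        rw [← coe_carg z, ← hsdef, hsck]
        rw [coe_eq_coe_iff]
        exact ⟨k, rfl⟩
      exact hw ((hnotX w₁ hw₁).trans (hnotX w₂ hw₂).symm)
  -- value of g on the rise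
  have hval : ∀ s : ℝ, c < s → s < d → g c < g s ∧ g s < g c + 1 := by
    intro s h1 h2
    obtain ⟨m, hm⟩ := hcS.1
    constructor
    · rcases eq_or_lt_of_le (hgm h1.le) with h | h
      · exfalso
        exact hIoo s h1 h2 ⟨m, by rw [← h, hm]⟩
      · exact h
    · by_contra hcon
      push_neg at hcon
      have hmem2 : g c + 1 ∈ Icc (g c) (g s) := ⟨by linarith, hcon⟩
      obtain ⟨u, hu1, hu2⟩ := intermediate_value_Icc h1.le hgc.continuousOn hmem2
      have huS : u ∈ S := ⟨m + 1, by rw [hu2, hm]; push_cast; ring⟩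
      have hcu : c ≠ u := by
        intro he
        rw [← he] at hu2
        linarith
      exact hIoo u (lt_of_le_of_ne hu1.1 hcu) (lt_of_le_of_lt hu1.2 h2) huS
  have hgd : g d = g c + 1 := by
    obtain ⟨m, hm⟩ := hcS.1
    obtain ⟨m', hm'⟩ := hdS.1
    have h1 : g c < g d := lt_of_lt_of_le (hval t₀ hct₀ htd).1 (hgm htd.le)
    have h2 : g d ≤ g c + 1 := by
      have := hgm hdc1
      rw [hg1 c] at this
      exact this
    have hmm' : m < m' := by
      rw [hm, hm'] at h1; exact_mod_cast h1
    have hmm'2 : m' ≤ m + 1 := by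
      rw [hm, hm'] at h2
      have : (m':ℝ) ≤ ((m + 1 : ℤ) : ℝ) := by push_cast; linarith
      exact_mod_cast this
    have : m' = m + 1 := le_antisymm hmm'2 (by omega)
    rw [hm, hm', this]; push_cast; ring
  refine ⟨c, d, hcd, hdlt, hmem, hgd, ?_⟩
  intro x k hx1 hx2
  have hy : g (x - ((k:ℤ) - 1 : ℤ)) = g x - ((k:ℝ) - 1) := by
    have := g_int hg1 (x - ((k - 1 : ℤ):ℝ)) (k - 1)
    rw [(by push_cast; ring : x - (((k - 1) : ℤ):ℝ) + (((k-1):ℤ):ℝ) = x)] at this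
    push_cast at this ⊢
    linarith
  set y : ℝ := x - ((k:ℝ) - 1) with hydef
  have hy1 : d ≤ y := by simp only [hydef]; linarith
  have hy2 : y ≤ c + 1 := by simp only [hydef]; linarith
  have hgy : g y = g c + 1 := by
    have ha := hgm hy1
    have hb := hgm hy2
    rw [hg1 c] at hb
    rw [hgd] at ha
    linarith
  have : g y = g x - ((k:ℝ) - 1) := by
    rw [← hy]
    congr 1
    push_cast
    ring
  rw [this] at hgy
  linarith

lemma coe_int_lemmas {c d : ℝ} (hcd : c < d) (hdc : d < c + 1) :
    ((c:ℝ) : AddCircle (1:ℝ)) ≠ ((d:ℝ) : AddCircle (1:ℝ)) := by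
  intro h
  obtain ⟨k, hk⟩ := coe_eq_coe_iff.mp h
  rcases lt_trichotomy k 0 with h' | h' | h'
  · have hk1 : k ≤ -1 := by omega
    have : (k:ℝ) ≤ -1 := by exact_mod_cast hk1
    linarith
  · rw [h'] at hk; push_cast at hk; linarith
  · have : (1:ℝ) ≤ (k:ℝ) := by exact_mod_cast h'
    linarith

lemma stair_frontier {X : Set (AddCircle (1:ℝ))} {c d : ℝ} (hXo : IsOpen X)
    (hcd : c < d) (hdc : d < c + 1)
    (hmem : ∀ t : ℝ, ((t:ℝ) : AddCircle (1:ℝ)) ∈ X ↔ ∃ k : ℤ, c + (k:ℝ) < t ∧ t < d + (k:ℝ)) :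
    frontier X = {((c:ℝ) : AddCircle (1:ℝ)), ((d:ℝ) : AddCircle (1:ℝ))} := by
  have hcX : ((c:ℝ) : AddCircle (1:ℝ)) ∉ X := by
    rw [hmem]
    rintro ⟨k, h1, h2⟩
    have hk0 : (k:ℝ) < 0 := by linarith
    have hk1 : k < 0 := by exact_mod_cast hk0
    have hk2 : k ≤ -1 := by omega
    have : (k:ℝ) ≤ -1 := by exact_mod_cast hk2
    linarith
  have hdX : ((d:ℝ) : AddCircle (1:ℝ)) ∉ X := by
    rw [hmem]
    rintro ⟨k, h1, h2⟩
    have hk0 : (0:ℝ) < (k:ℝ) := by linarith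
    have : 0 < k := by exact_mod_cast hk0
    have : (1:ℝ) ≤ (k:ℝ) := by exact_mod_cast this
    linarith
  have hXIoo : X = (fun r : ℝ => ((r:ℝ) : AddCircle (1:ℝ))) '' (Ioo c d) := by
    ext z
    constructor
    · intro hz
      have hz' : ((carg z : ℝ) : AddCircle (1:ℝ)) ∈ X := by rw [coe_carg]; exact hz
      obtain ⟨k, h1, h2⟩ := (hmem (carg z)).mp hz'
      refine ⟨carg z - k, ⟨by linarith, by linarith⟩, ?_⟩
      show ((carg z - (k:ℝ) : ℝ) : AddCircle (1:ℝ)) = z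
      have : ((carg z - (k:ℝ) : ℝ) : AddCircle (1:ℝ)) = ((carg z : ℝ) : AddCircle (1:ℝ)) :=
        coe_eq_coe_iff.mpr ⟨-k, by push_cast; ring⟩
      rw [this, coe_carg]
    · rintro ⟨r, hr, rfl⟩
      rw [hmem]
      exact ⟨0, by push_cast; exact ⟨by linarith [hr.1], by linarith [hr.2]⟩⟩
  have hclosure : closure X = (fun r : ℝ => ((r:ℝ) : AddCircle (1:ℝ))) '' (Icc c d) := by
    apply le_antisymm
    · apply closure_minimal
      · rw [hXIoo]
        exact Set.image_mono Ioo_subset_Icc_self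
      · exact (isCompact_Icc.image (AddCircle.continuous_mk' 1)).isClosed
    · calc (fun r : ℝ => ((r:ℝ) : AddCircle (1:ℝ))) '' (Icc c d)
          = (fun r : ℝ => ((r:ℝ) : AddCircle (1:ℝ))) '' (closure (Ioo c d)) := by
            rw [closure_Ioo hcd.ne]
      _ ⊆ closure ((fun r : ℝ => ((r:ℝ) : AddCircle (1:ℝ))) '' (Ioo c d)) :=
            image_closure_subset_closure_image (AddCircle.continuous_mk' 1)
      _ = closure X := by rw [← hXIoo]
  rw [frontier, hXo.interior_eq, hclosure]
  ext z
  constructor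
  · rintro ⟨⟨u, hu, rfl⟩, hzX⟩
    rcases eq_or_lt_of_le hu.1 with h | h
    · exact Set.mem_insert_iff.mpr (Or.inl (by rw [← h]))
    · rcases eq_or_lt_of_le hu.2 with h' | h'
      · exact Set.mem_insert_iff.mpr (Or.inr (by rw [h']; rfl))
      · exfalso
        apply hzX
        rw [hXIoo]
        exact ⟨u, ⟨h, h'⟩, rfl⟩
  · intro hz
    rcases hz with h | h
    · rw [h]; exact ⟨⟨c, ⟨le_refl _, hcd.le⟩, rfl⟩, hcX⟩
    · rw [h]; exact ⟨⟨d, ⟨hcd.le, le_refl _⟩, rfl⟩, hdX⟩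

lemma gap_lemma {cI dI cJ dJ : ℝ} (hIcd : cI < dI) (hJcd : cJ < dJ)
    (hdisj : ∀ t : ℝ, (∃ k : ℤ, cI + (k:ℝ) < t ∧ t < dI + (k:ℝ)) →
      (∃ k : ℤ, cJ + (k:ℝ) < t ∧ t < dJ + (k:ℝ)) → False) :
    ∃ k₀ : ℤ, dI + (k₀:ℝ) ≤ cJ ∧ dJ ≤ cI + 1 + (k₀:ℝ) := by
  set k₀ : ℤ := ⌈dJ - cI⌉ - 1 with hk₀
  have h1 : cI + (k₀:ℝ) < dJ := by
    have := Int.ceil_lt_add_one (dJ - cI)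
    push_cast [hk₀]
    linarith
  have h2 : dJ ≤ cI + 1 + (k₀:ℝ) := by
    have := Int.le_ceil (dJ - cI)
    push_cast [hk₀]
    linarith
  refine ⟨k₀, ?_, h2⟩
  by_contra hcon
  push_neg at hcon
  rcases le_or_gt (cI + (k₀:ℝ)) cJ with hcase | hcase
  · set t : ℝ := (cJ + min dJ (dI + (k₀:ℝ)))/2 with ht
    have htJ : cJ < t ∧ t < dJ := by
      constructor
      · rw [ht]
        have : cJ < min dJ (dI + (k₀:ℝ)) := lt_min hJcd hcon
        linarith
      · rw [ht]
        have := min_le_left dJ (dI + (k₀:ℝ))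
        linarith [hJcd, hcon]
    have htI : cI + (k₀:ℝ) < t ∧ t < dI + (k₀:ℝ) := by
      constructor
      · calc cI + (k₀:ℝ) ≤ cJ := hcase
        _ < t := htJ.1
      · rw [ht]
        have := min_le_right dJ (dI + (k₀:ℝ))
        linarith [hJcd, hcon]
    exact hdisj t ⟨k₀, htI⟩ ⟨0, by push_cast; exact ⟨by linarith [htJ.1], by linarith [htJ.2]⟩⟩
  · set t : ℝ := (cI + (k₀:ℝ) + min dJ (dI + (k₀:ℝ)))/2 with ht
    have hlt : cI + (k₀:ℝ) < min dJ (dI + (k₀:ℝ)) := lt_min h1 (by linarith)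
    have htI : cI + (k₀:ℝ) < t ∧ t < dI + (k₀:ℝ) := by
      constructor
      · rw [ht]; linarith
      · rw [ht]
        have := min_le_right dJ (dI + (k₀:ℝ))
        linarith
    have htJ : cJ < t ∧ t < dJ := by
      constructor
      · rw [ht]; linarith
      · rw [ht]
        have := min_le_left dJ (dI + (k₀:ℝ))
        linarith
    exact hdisj t ⟨k₀, htI⟩ ⟨0, by push_cast; exact ⟨by linarith [htJ.1], by linarith [htJ.2]⟩⟩


/-- `π'` is the standard degree-one retraction of the circle `ℝ/ℤ` onto the open arc `X`:
it is continuous, admits a monotone lift `g : ℝ → ℝ` with `g (t+1) = g t + 1`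
(so `π'` has degree one), sends the complement of `X` to `0`, and maps `X` bijectively
(hence, preserving orientation) onto `(ℝ/ℤ) ∖ {0}`. -/
def IsArcRetraction (X : Set (AddCircle (1:ℝ)))
    (π' : AddCircle (1:ℝ) → AddCircle (1:ℝ)) : Prop :=
  Continuous π' ∧
  (∃ g : ℝ → ℝ, Continuous g ∧ Monotone g ∧ (∀ t : ℝ, g (t + 1) = g t + 1) ∧
    ∀ t : ℝ, π' ((t : ℝ) : AddCircle (1:ℝ)) = ((g t : ℝ) : AddCircle (1:ℝ))) ∧
  (∀ z : AddCircle (1:ℝ), z ∉ X → π' z = 0) ∧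
  Set.BijOn π' X {0}ᶜ

/-- **Retractions to distinct complementary arcs are non-homotopic rel `K`.**
Let `M` be path-connected, `K ⊆ M` nonempty compact, `f : M → ℝ/ℤ` continuous, and let
`I ≠ J` be connected components of `(ℝ/ℤ) ∖ f(K)`, where the frontier of `I` consists of
two distinct points `p, q` attained by `f` on `K`. Then there is no homotopy from
`π_I ∘ f` to `π_J ∘ f` that sends `K` to `0` at all times. -/
theorem arcRetractions_not_homotopic_rel
    {M : Type*} [TopologicalSpace M] [PathConnectedSpace M]
    (K : Set M) (hKne : K.Nonempty) (hKc : IsCompact K)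
    (f : M → AddCircle (1:ℝ)) (hf : Continuous f)
    (I J : Set (AddCircle (1:ℝ)))
    (hI : ∃ z ∈ (f '' K)ᶜ, I = connectedComponentIn (f '' K)ᶜ z)
    (hJ : ∃ z ∈ (f '' K)ᶜ, J = connectedComponentIn (f '' K)ᶜ z)
    (hIJ : I ≠ J)
    (p q : AddCircle (1:ℝ)) (hpq : p ≠ q) (hfr : frontier I = {p, q})
    (k₁ k₂ : M) (hk₁ : k₁ ∈ K) (hk₂ : k₂ ∈ K) (hfk₁ : f k₁ = p) (hfk₂ : f k₂ = q)
    (πI πJ : AddCircle (1:ℝ) → AddCircle (1:ℝ))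
    (hπI : IsArcRetraction I πI) (hπJ : IsArcRetraction J πJ) :
    ¬ ∃ H : ℝ → M → AddCircle (1:ℝ),
        ContinuousOn (fun z : ℝ × M => H z.1 z.2) (Set.Icc (0:ℝ) 1 ×ˢ Set.univ) ∧
        (∀ x : M, H 0 x = πI (f x)) ∧ (∀ x : M, H 1 x = πJ (f x)) ∧
        ∀ t ∈ Set.Icc (0:ℝ) 1, ∀ x ∈ K, H t x = 0 := by

  rintro ⟨H, Hcont, H0, H1, HK⟩
  classical
  obtain ⟨hπIc, ⟨gI, hgIc, hgIm, hgI1, hgIcomm⟩, hπIzero, hπIbij⟩ := hπI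
  obtain ⟨hπJc, ⟨gJ, hgJc, hgJm, hgJ1, hgJcomm⟩, hπJzero, hπJbij⟩ := hπJ
  obtain ⟨zI, hzI, hIeq⟩ := hI
  obtain ⟨zJ, hzJ, hJeq⟩ := hJ
  -- basic membership facts
  have hzI' : zI ∈ I := hIeq ▸ mem_connectedComponentIn hzI
  have hzJ' : zJ ∈ J := hJeq ▸ mem_connectedComponentIn hzJ
  have hIconn : IsPreconnected I := by
    rw [hIeq]
    exact (isConnected_connectedComponentIn_iff.mpr hzI).isPreconnected
  have hJconn : IsPreconnected J := by
    rw [hJeq]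
    exact (isConnected_connectedComponentIn_iff.mpr hzJ).isPreconnected
  have hIo : IsOpen I := by
    have hIeq2 : I = πI ⁻¹' ({0}ᶜ) := by
      ext z
      constructor
      · intro hz; exact hπIbij.mapsTo hz
      · intro hz
        by_contra hzX
        exact hz (hπIzero z hzX)
    rw [hIeq2]
    exact isOpen_compl_singleton.preimage hπIc
  have hpff : p ∈ f '' K := ⟨k₁, hk₁, hfk₁⟩
  have hqff : q ∈ f '' K := ⟨k₂, hk₂, hfk₂⟩
  have hpI : p ∉ I := by
    have hpf : p ∈ frontier I := by rw [hfr]; exact mem_insert _ _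
    rw [hIo.frontier_eq] at hpf
    exact hpf.2
  have hqI : q ∉ I := by
    have hqf : q ∈ frontier I := by rw [hfr]; exact mem_insert_iff.mpr (Or.inr rfl)
    rw [hIo.frontier_eq] at hqf
    exact hqf.2
  have hJsub : J ⊆ (f '' K)ᶜ := hJeq ▸ connectedComponentIn_subset _ _
  have hpJ : p ∉ J := fun h => (hJsub h) hpff
  have hqJ : q ∉ J := fun h => (hJsub h) hqff
  -- staircase structures
  obtain ⟨cI, dI, hIcd, hIdc, hImem, hgIval, hIplat⟩ :=
    stair_struct hπIc hgIc hgIm hgI1 hgIcomm hπIzero hπIbij.mapsTo hIconn hzI' hpq hpI hqI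
  obtain ⟨cJ, dJ, hJcd, hJdc, hJmem, hgJval, hJplat⟩ :=
    stair_struct hπJc hgJc hgJm hgJ1 hgJcomm hπJzero hπJbij.mapsTo hJconn hzJ' hpq hpJ hqJ
  -- frontier identification
  have hfrI : frontier I = {((cI:ℝ) : AddCircle (1:ℝ)), ((dI:ℝ) : AddCircle (1:ℝ))} :=
    stair_frontier hIo hIcd hIdc hImem
  have hpairs : ({p, q} : Set (AddCircle (1:ℝ)))
      = {((cI:ℝ) : AddCircle (1:ℝ)), ((dI:ℝ) : AddCircle (1:ℝ))} := by
    rw [← hfr, hfrI]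
  have hcdne : ((cI:ℝ) : AddCircle (1:ℝ)) ≠ ((dI:ℝ) : AddCircle (1:ℝ)) :=
    coe_int_lemmas hIcd hIdc
  -- disjointness
  have hIJdisj : ∀ z, z ∈ I → z ∈ J → False := by
    intro z hzIw hzJw
    apply hIJ
    have h1 : I = connectedComponentIn (f '' K)ᶜ z := by
      rw [hIeq]; exact connectedComponentIn_eq (hIeq ▸ hzIw)
    have h2 : J = connectedComponentIn (f '' K)ᶜ z := by
      rw [hJeq]; exact connectedComponentIn_eq (hJeq ▸ hzJw)
    rw [h1, h2]
  have hgap : ∃ k₀ : ℤ, dI + (k₀:ℝ) ≤ cJ ∧ dJ ≤ cI + 1 + (k₀:ℝ) := by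
    apply gap_lemma hIcd hJcd
    intro t hImem' hJmem'
    exact hIJdisj _ ((hImem t).mpr hImem') ((hJmem t).mpr hJmem')
  obtain ⟨k₀, hgap1, hgap2⟩ := hgap
  -- the homotopy as a map on ℝ × ℝ
  have hjoin : Joined k₁ k₂ := PathConnectedSpace.joined k₁ k₂
  set γ : Path k₁ k₂ := hjoin.somePath with hγ
  set pr : ℝ → ℝ := fun s => ((Set.projIcc (0:ℝ) 1 zero_le_one s : Set.Icc (0:ℝ) 1) : ℝ) with hpr
  have hprc : Continuous pr := continuous_subtype_val.comp continuous_projIcc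
  have hprmem : ∀ s, pr s ∈ Set.Icc (0:ℝ) 1 := fun s => (Set.projIcc (0:ℝ) 1 zero_le_one s).2
  have hpr0 : pr 0 = 0 := by simp [hpr]
  have hpr1 : pr 1 = 1 := by simp [hpr]
  have hpridem : ∀ s, pr (pr s) = pr s := by
    intro s
    simp only [hpr]
    rw [Set.projIcc_of_mem zero_le_one (hprmem s)]
  set Φ : ℝ × ℝ → AddCircle (1:ℝ) := fun z => H (pr z.1) (γ.extend z.2) with hΦdef
  have hΦc : Continuous Φ := by
    have heq : Φ = (fun z : ℝ × M => H z.1 z.2) ∘ (fun z : ℝ × ℝ => (pr z.1, γ.extend z.2)) := rfl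
    rw [heq]
    exact Hcont.comp_continuous
      ((hprc.comp continuous_fst).prodMk (γ.continuous_extend.comp continuous_snd))
      (fun z => ⟨hprmem z.1, mem_univ _⟩)
  have hΦ0 : ∀ t : ℝ, Φ (0, t) = πI (f (γ.extend t)) := by
    intro t; simp only [hΦdef, hpr0]; rw [H0]
  have hΦ1 : ∀ t : ℝ, Φ (1, t) = πJ (f (γ.extend t)) := by
    intro t; simp only [hΦdef, hpr1]; rw [H1]
  have hΦt0 : ∀ s : ℝ, Φ (s, 0) = 0 := by
    intro s
    simp only [hΦdef]
    rw [γ.extend_zero]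
    exact HK _ (hprmem s) _ hk₁
  have hΦt1 : ∀ s : ℝ, Φ (s, 1) = 0 := by
    intro s
    simp only [hΦdef]
    rw [γ.extend_one]
    exact HK _ (hprmem s) _ hk₂
  have hΦpr : ∀ s t : ℝ, Φ (s, t) = Φ (pr s, t) := by
    intro s t
    simp only [hΦdef]
    rw [hpridem]
  -- moduli of continuity
  obtain ⟨δI, hδIpos, hδIlt, hδI⟩ := stair_unif hgIc hgI1
  obtain ⟨δJ, hδJpos, hδJlt, hδJ⟩ := stair_unif hgJc hgJ1
  set δ : ℝ := min δI δJ with hδdef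
  have hδpos : 0 < δ := lt_min hδIpos hδJpos
  have hδlt : δ < 1/2 := lt_of_le_of_lt (min_le_left _ _) hδIlt
  have hδI' : ∀ x y : ℝ, |x - y| ≤ δ → |gI x - gI y| < 1/2 :=
    fun x y h => hδI x y (le_trans h (min_le_left _ _))
  have hδJ' : ∀ x y : ℝ, |x - y| ≤ δ → |gJ x - gJ y| < 1/2 :=
    fun x y h => hδJ x y (le_trans h (min_le_right _ _))
  -- uniform continuity of Φ on the unit square
  have hQc : IsCompact ((Set.Icc (0:ℝ) 1) ×ˢ (Set.Icc (0:ℝ) 1)) := isCompact_Icc.prod isCompact_Icc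
  have hucΦ := hQc.uniformContinuousOn_of_continuous hΦc.continuousOn
  rw [Metric.uniformContinuousOn_iff] at hucΦ
  obtain ⟨δ₁, hδ₁pos, hδ₁⟩ := hucΦ δ hδpos
  -- uniform continuity of f ∘ γ.extend on [0,1]
  set w : ℝ → AddCircle (1:ℝ) := fun t => f (γ.extend t) with hwdef
  have hwc : Continuous w := hf.comp γ.continuous_extend
  have hucw := isCompact_Icc.uniformContinuousOn_of_continuous
    (s := Set.Icc (0:ℝ) 1) hwc.continuousOn
  rw [Metric.uniformContinuousOn_iff] at hucw
  obtain ⟨δ₂, hδ₂pos, hδ₂⟩ := hucw δ hδpos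
  -- choose n
  obtain ⟨n₀, hn₀⟩ := exists_nat_one_div_lt (lt_min hδ₁pos hδ₂pos)
  set n : ℕ := n₀ + 1 with hn
  have hnpos : 0 < n := Nat.succ_pos _
  have hnpos' : (0:ℝ) < n := by exact_mod_cast hnpos
  have hninv : 1/(n:ℝ) < min δ₁ δ₂ := by
    have : ((n₀:ℝ) + 1) = (n:ℝ) := by push_cast [hn]; ring
    rwa [this] at hn₀
  have htmem : ∀ i : ℕ, i ≤ n → ((i:ℝ)/n) ∈ Set.Icc (0:ℝ) 1 := by
    intro i hi
    constructor
    · positivity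
    · rw [div_le_one hnpos']
      exact_mod_cast hi
  have htdist : ∀ i : ℕ, dist (((i+1:ℕ):ℝ)/n) ((i:ℝ)/n) = 1/n := by
    intro i
    have he : ((i:ℝ)+1)/(n:ℝ) - (i:ℝ)/(n:ℝ) = 1/(n:ℝ) := by ring
    rw [Real.dist_eq, Nat.cast_add, Nat.cast_one, he, abs_of_pos (by positivity)]
  -- the chain
  set u : ℕ → AddCircle (1:ℝ) := fun i => w ((i:ℝ)/n) with hudef
  have hu : ∀ i, i < n → ‖u (i+1) - u i‖ ≤ δ := by
    intro i hi
    have h1 : dist (u (i+1)) (u i) < δ := by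
      apply hδ₂ _ (htmem (i+1) hi) _ (htmem i hi.le)
      rw [htdist i]
      exact lt_of_lt_of_le hninv (min_le_right _ _)
    rw [dist_eq_norm] at h1
    exact h1.le
  set a : ℝ := chainLift u 0 with hadef
  set b : ℝ := chainLift u n with hbdef
  have hap : ((a:ℝ) : AddCircle (1:ℝ)) = p := by
    rw [hadef, chainLift_coe]
    simp only [hudef, hwdef, Nat.cast_zero, zero_div, Path.extend_zero, hfk₁]
  have hbq : ((b:ℝ) : AddCircle (1:ℝ)) = q := by
    rw [hbdef, chainLift_coe]
    have hnn : ((n:ℝ))/(n:ℝ) = 1 := div_self (ne_of_gt hnpos')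
    simp only [hudef, hwdef]
    rw [hnn, Path.extend_one, hfk₂]
  -- the discrete degree function
  set D : ℝ → ℝ := fun s =>
    ∑ i ∈ Finset.range n, carg (Φ (s, ((i+1:ℕ):ℝ)/n) - Φ (s, (i:ℝ)/n)) with hDdef
  -- norms of increments are < 1/2, uniformly in s
  have hnorm : ∀ (s : ℝ) (i : ℕ), i < n → ‖Φ (s, ((i+1:ℕ):ℝ)/n) - Φ (s, (i:ℝ)/n)‖ < δ := by
    intro s i hi
    rw [hΦpr s (((i+1:ℕ):ℝ)/n), hΦpr s (((i:ℕ):ℝ)/n)]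
    have h1 : (pr s, ((i+1:ℕ):ℝ)/n) ∈ (Set.Icc (0:ℝ) 1) ×ˢ (Set.Icc (0:ℝ) 1) :=
      ⟨hprmem s, htmem (i+1) hi⟩
    have h2 : (pr s, ((i:ℕ):ℝ)/n) ∈ (Set.Icc (0:ℝ) 1) ×ˢ (Set.Icc (0:ℝ) 1) :=
      ⟨hprmem s, htmem i hi.le⟩
    have hd : dist ((pr s, ((i+1:ℕ):ℝ)/n) : ℝ × ℝ) ((pr s, ((i:ℕ):ℝ)/n) : ℝ × ℝ) < δ₁ := by
      rw [Prod.dist_eq]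
      have : dist (pr s) (pr s) = 0 := dist_self _
      rw [this]
      rw [max_eq_right dist_nonneg]
      rw [htdist i]
      exact lt_of_lt_of_le hninv (min_le_left _ _)
    have := hδ₁ _ h1 _ h2 hd
    rw [dist_eq_norm] at this
    exact this
  have hnormhalf : ∀ (s : ℝ) (i : ℕ), i < n → ‖Φ (s, ((i+1:ℕ):ℝ)/n) - Φ (s, (i:ℝ)/n)‖ < 1/2 :=
    fun s i hi => lt_trans (hnorm s i hi) hδlt
  -- continuity of D
  have hDc : Continuous D := by
    rw [hDdef]
    apply continuous_finset_sum
    intro i hi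
    rw [Finset.mem_range] at hi
    rw [continuous_iff_continuousAt]
    intro s
    have hinner : Continuous (fun s : ℝ => Φ (s, ((i+1:ℕ):ℝ)/n) - Φ (s, (i:ℝ)/n)) := by
      apply Continuous.sub
      · exact hΦc.comp (continuous_id.prodMk continuous_const)
      · exact hΦc.comp (continuous_id.prodMk continuous_const)
    show ContinuousAt (carg ∘ (fun s : ℝ => Φ (s, ((i+1:ℕ):ℝ)/n) - Φ (s, (i:ℝ)/n))) s
    exact ContinuousAt.comp (x := s) (carg_continuousAt (hnormhalf s i hi)) hinner.continuousAt
  -- integrality of D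
  have hDint : ∀ s : ℝ, ∃ m : ℤ, D s = m := by
    intro s
    have hsum : ((D s : ℝ) : AddCircle (1:ℝ)) = 0 := by
      have hmap := map_sum (QuotientAddGroup.mk' (AddSubgroup.zmultiples (1:ℝ)))
        (fun i => carg (Φ (s, ((i+1:ℕ):ℝ)/n) - Φ (s, (i:ℝ)/n))) (Finset.range n)
      have hDs : ((D s : ℝ) : AddCircle (1:ℝ))
          = ∑ i ∈ Finset.range n, ((carg (Φ (s, ((i+1:ℕ):ℝ)/n) - Φ (s, (i:ℝ)/n)) : ℝ) : AddCircle (1:ℝ)) := hmap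
      rw [hDs]
      have hterm : ∀ i ∈ Finset.range n,
          ((carg (Φ (s, ((i+1:ℕ):ℝ)/n) - Φ (s, (i:ℝ)/n)) : ℝ) : AddCircle (1:ℝ))
          = Φ (s, ((i+1:ℕ):ℝ)/n) - Φ (s, (i:ℝ)/n) := fun i _ => coe_carg _
      rw [Finset.sum_congr rfl hterm]
      rw [Finset.sum_range_sub (fun i => Φ (s, ((i:ℕ):ℝ)/n)) n]
      have h0 : Φ (s, ((0:ℕ):ℝ)/n) = 0 := by
        rw [(by simp : ((0:ℕ):ℝ)/(n:ℝ) = (0:ℝ))]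
        exact hΦt0 s
      have h1 : Φ (s, ((n:ℕ):ℝ)/n) = 0 := by
        rw [div_self (ne_of_gt hnpos')]
        exact hΦt1 s
      rw [h0, h1]
      simp
    rw [AddCircle.coe_eq_zero_iff] at hsum
    obtain ⟨m, hm⟩ := hsum
    exact ⟨m, by simpa using hm.symm⟩
  -- evaluate D at 0 and 1
  have hD0 : D 0 = gI b - gI a := by
    rw [hDdef]
    have hterm : ∀ i ∈ Finset.range n,
        carg (Φ (0, ((i+1:ℕ):ℝ)/n) - Φ (0, (i:ℝ)/n))
        = carg (πI (u (i+1)) - πI (u i)) := by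
      intro i _
      rw [hΦ0, hΦ0]
    show ∑ i ∈ Finset.range n, carg (Φ (0, ((i+1:ℕ):ℝ)/n) - Φ (0, (i:ℝ)/n)) = _
    rw [Finset.sum_congr rfl hterm]
    exact chain_sum hgIcomm hδI' u n hu
  have hD1 : D 1 = gJ b - gJ a := by
    rw [hDdef]
    have hterm : ∀ i ∈ Finset.range n,
        carg (Φ (1, ((i+1:ℕ):ℝ)/n) - Φ (1, (i:ℝ)/n))
        = carg (πJ (u (i+1)) - πJ (u i)) := by
      intro i _
      rw [hΦ1, hΦ1]
    show ∑ i ∈ Finset.range n, carg (Φ (1, ((i+1:ℕ):ℝ)/n) - Φ (1, (i:ℝ)/n)) = _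
    rw [Finset.sum_congr rfl hterm]
    exact chain_sum hgJcomm hδJ' u n hu
  have hDeq : gI b - gI a = gJ b - gJ a := by
    rw [← hD0, ← hD1]
    exact int_valued_const hDc hDint
  -- identify p, q with the endpoints of I
  have hpmem : p ∈ ({((cI:ℝ) : AddCircle (1:ℝ)), ((dI:ℝ) : AddCircle (1:ℝ))} : Set _) := by
    rw [← hpairs]; exact mem_insert _ _
  have hqmem : q ∈ ({((cI:ℝ) : AddCircle (1:ℝ)), ((dI:ℝ) : AddCircle (1:ℝ))} : Set _) := by
    rw [← hpairs]; exact mem_insert_iff.mpr (Or.inr rfl)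
  -- final contradiction, case analysis
  rcases hpmem with hpc | hpd
  · -- p = mk cI, hence q = mk dI
    have hqd : q = ((dI:ℝ) : AddCircle (1:ℝ)) := by
      rcases hqmem with h | h
      · exact absurd (hpc ▸ h : q = p) (Ne.symm hpq)
      · exact h
    obtain ⟨m₁, hm₁⟩ := coe_eq_coe_iff.mp (hap.trans hpc)
    obtain ⟨n₁, hn₁⟩ := coe_eq_coe_iff.mp (hbq.trans hqd)
    have hgIa : gI a = gI cI + m₁ := by
      have h1 : dI + (m₁:ℝ) - 1 ≤ a := by rw [hm₁]; linarith
      have h2 : a ≤ cI + (m₁:ℝ) := le_of_eq hm₁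
      exact hIplat a m₁ h1 h2
    have hgIb : gI b = gI cI + 1 + n₁ := by
      have := g_int hgI1 dI n₁
      rw [← hn₁] at this
      rw [this, hgIval]
    have hgJa : gJ a = gJ cJ + ((m₁ - k₀ : ℤ) : ℝ) := by
      have := hJplat a (m₁ - k₀) (by push_cast; rw [hm₁]; linarith)
        (by push_cast; rw [hm₁]; linarith)
      rw [this]
    have hgJb : gJ b = gJ cJ + ((n₁ - k₀ : ℤ) : ℝ) := by
      have := hJplat b (n₁ - k₀) (by push_cast; rw [hn₁]; linarith)
        (by push_cast; rw [hn₁]; linarith)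
      rw [this]
    rw [hgIa, hgIb, hgJa, hgJb] at hDeq
    push_cast at hDeq
    linarith
  · -- p = mk dI, hence q = mk cI
    have hqc : q = ((cI:ℝ) : AddCircle (1:ℝ)) := by
      rcases hqmem with h | h
      · exact h
      · rw [mem_singleton_iff] at hpd
        rw [mem_singleton_iff] at h
        exact absurd (hpd ▸ h : q = p) (Ne.symm hpq)
    rw [mem_singleton_iff] at hpd
    obtain ⟨m₁, hm₁⟩ := coe_eq_coe_iff.mp (hap.trans hpd)
    obtain ⟨n₁, hn₁⟩ := coe_eq_coe_iff.mp (hbq.trans hqc)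
    have hgIa : gI a = gI cI + 1 + m₁ := by
      have := g_int hgI1 dI m₁
      rw [← hm₁] at this
      rw [this, hgIval]
    have hgIb : gI b = gI cI + n₁ := by
      have h1 : dI + (n₁:ℝ) - 1 ≤ b := by rw [hn₁]; linarith
      have h2 : b ≤ cI + (n₁:ℝ) := le_of_eq hn₁
      exact hIplat b n₁ h1 h2
    have hgJa : gJ a = gJ cJ + ((m₁ - k₀ : ℤ) : ℝ) := by
      have := hJplat a (m₁ - k₀) (by push_cast; rw [hm₁]; linarith)
        (by push_cast; rw [hm₁]; linarith)
      rw [this]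
    have hgJb : gJ b = gJ cJ + ((n₁ - k₀ : ℤ) : ℝ) := by
      have := hJplat b (n₁ - k₀) (by push_cast; rw [hn₁]; linarith)
        (by push_cast; rw [hn₁]; linarith)
      rw [this]
    rw [hgIa, hgIb, hgJa, hgJb] at hDeq
    push_cast at hDeq
    linarith
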